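/- Let N and H be complex Hilbert spaces and let U = [[D, C], [C*, A]] be a selfadjoint contraction on N ⊕ H, where D : N → N, C : H → N, A : H → H. For x ∈ (−1, 1) set Θ(x) = D + x·C (I − xA)^{-1} C*. Then for every f ∈ N: the real number ⟨Θ(x)f, f⟩ converges as x → −1 from the right to (inf over h ∈ H of ⟨(I + U)(f ⊕ h), f ⊕ h⟩) − ‖f‖², and converges as x → 1 from the left to ‖f‖² − (inf over h ∈ H of ⟨(I − U)(f ⊕ h), f ⊕ h⟩). (That is, the strong limits Θ(∓1) exist and satisfy Θ(−1) = (I + U)_N↾N − I and Θ(1) = I − (I − U)_N↾N, where (·)_N denotes the Kreĭn shorted operator to N.) -/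

import Mathlib

open ContinuousLinearMap Complex Filter
open scoped InnerProductSpace Topology

set_option synthInstance.maxHeartbeats 1000000
set_option maxHeartbeats 1000000

noncomputable section

variable {E F : Type*} [NormedAddCommGroup E] [InnerProductSpace ℂ E]
  [NormedAddCommGroup F] [InnerProductSpace ℂ F]

/-- The 2×2 block operator `[[A, B], [C, D]]` on the Hilbert space orthogonal direct sum
`E ⊕ F` (realized as `WithLp 2 (E × F)`), acting by `(e, f) ↦ (A e + B f, C e + D f)`. -/
def blk (A : E →L[ℂ] E) (B : F →L[ℂ] E) (C : E →L[ℂ] F) (D : F →L[ℂ] F) :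
    WithLp 2 (E × F) →L[ℂ] WithLp 2 (E × F) :=
  ((WithLp.prodContinuousLinearEquiv 2 ℂ E F).symm : E × F →L[ℂ] WithLp 2 (E × F)) ∘L
    ((A.coprod B).prod (C.coprod D)) ∘L
    ((WithLp.prodContinuousLinearEquiv 2 ℂ E F) : WithLp 2 (E × F) →L[ℂ] E × F)

/-- The isometric embedding of the first summand `E` into `E ⊕ F`. -/
def inl2 : E →L[ℂ] WithLp 2 (E × F) :=
  ((WithLp.prodContinuousLinearEquiv 2 ℂ E F).symm : E × F →L[ℂ] WithLp 2 (E × F)) ∘L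
    .inl ℂ E F

/-- The isometric embedding of the second summand `F` into `E ⊕ F`. -/
def inr2 : F →L[ℂ] WithLp 2 (E × F) :=
  ((WithLp.prodContinuousLinearEquiv 2 ℂ E F).symm : E × F →L[ℂ] WithLp 2 (E × F)) ∘L
    .inr ℂ E F

/-- The orthogonal projection of `E ⊕ F` onto the first summand `E`. -/
def fst2 : WithLp 2 (E × F) →L[ℂ] E :=
  .fst ℂ E F ∘L ((WithLp.prodContinuousLinearEquiv 2 ℂ E F) : WithLp 2 (E × F) →L[ℂ] E × F)

/-- The orthogonal projection of `E ⊕ F` onto the second summand `F`. -/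
def snd2 : WithLp 2 (E × F) →L[ℂ] F :=
  .snd ℂ E F ∘L ((WithLp.prodContinuousLinearEquiv 2 ℂ E F) : WithLp 2 (E × F) →L[ℂ] E × F)

/-- The element `(e, f)` of the orthogonal direct sum `E ⊕ F`. -/
def mk2 (e : E) (f : F) : WithLp 2 (E × F) :=
  (WithLp.prodContinuousLinearEquiv 2 ℂ E F).symm (e, f)


section helpers

variable {H : Type*} [NormedAddCommGroup H] [InnerProductSpace ℂ H]

lemma re_inner_smul_right (r : ℝ) (a b : H) : (⟪a, r • b⟫_ℂ).re = r * (⟪a, b⟫_ℂ).re := by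
  rw [RCLike.real_smul_eq_coe_smul (K := ℂ), inner_smul_right]; simp

lemma re_inner_smul_left (r : ℝ) (a b : H) : (⟪r • a, b⟫_ℂ).re = r * (⟪a, b⟫_ℂ).re := by
  rw [RCLike.real_smul_eq_coe_smul (K := ℂ), inner_smul_left]; simp

lemma re_inner_symm (a b : H) : (⟪a, b⟫_ℂ).re = (⟪b, a⟫_ℂ).re := by
  rw [← inner_conj_symm a b]; exact Complex.conj_re _

lemma myIInf_const_add {ι : Sort*} [Nonempty ι] (c : ℝ) (q : ι → ℝ) (b : ℝ)
    (hb : ∀ i, b ≤ q i) : (⨅ i, (c + q i)) = c + ⨅ i, q i := by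
  have h1 : BddBelow (Set.range q) := ⟨b, by rintro _ ⟨i, rfl⟩; exact hb i⟩
  have h2 : BddBelow (Set.range fun i => c + q i) :=
    ⟨c + b, by rintro _ ⟨i, rfl⟩; have := hb i; simpa using by linarith⟩
  apply le_antisymm
  · rw [← sub_le_iff_le_add']
    exact le_ciInf fun i => by have := ciInf_le h2 i; simpa using by linarith
  · exact le_ciInf fun i => by have := ciInf_le h1 i; simpa using by linarith

lemma sq_key (T : H →L[ℂ] H) (hsym : ∀ h k : H, ⟪T h, k⟫_ℂ = ⟪h, T k⟫_ℂ)
    (hpos : ∀ h : H, 0 ≤ (⟪T h, h⟫_ℂ).re) {ε : ℝ} (hε : 0 ≤ ε) (g h₀ : H)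
    (hh₀ : T h₀ + (ε : ℂ) • h₀ = -g) :
    (⨅ h : H, ((⟪T h, h⟫_ℂ).re + 2 * (⟪g, h⟫_ℂ).re + ε * ‖h‖ ^ 2)) = (⟪g, h₀⟫_ℂ).re := by
  haveI : Nonempty H := ⟨0⟩
  have hTh₀ : T h₀ = -g - (ε : ℂ) • h₀ := by rw [eq_sub_iff_add_eq]; exact hh₀
  have key : ∀ h : H, (⟪T h, h⟫_ℂ).re + 2 * (⟪g, h⟫_ℂ).re + ε * ‖h‖ ^ 2
      = (⟪g, h₀⟫_ℂ).re + ((⟪T (h - h₀), h - h₀⟫_ℂ).re + ε * ‖h - h₀‖ ^ 2) := by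
    intro h
    have e1 : (⟪T h, h₀⟫_ℂ).re = -(⟪g, h⟫_ℂ).re - ε * (⟪h, h₀⟫_ℂ).re := by
      rw [hsym, hTh₀]
      simp [inner_sub_right, inner_smul_right, Complex.sub_re, Complex.neg_re,
        Complex.re_ofReal_mul, Complex.smul_re, smul_eq_mul, re_inner_symm h g,
        re_inner_smul_right]
    have e2 : (⟪T h₀, h⟫_ℂ).re = -(⟪g, h⟫_ℂ).re - ε * (⟪h, h₀⟫_ℂ).re := by
      rw [hTh₀]
      simp [inner_sub_left, inner_smul_left, Complex.sub_re, Complex.neg_re,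
        Complex.conj_ofReal, Complex.re_ofReal_mul, Complex.smul_re, smul_eq_mul,
        re_inner_symm h₀ h, re_inner_smul_right, re_inner_smul_left]
    have e3 : (⟪T h₀, h₀⟫_ℂ).re = -(⟪g, h₀⟫_ℂ).re - ε * ‖h₀‖ ^ 2 := by
      have hself : (⟪h₀, h₀⟫_ℂ).re = ‖h₀‖ ^ 2 := by
        simpa using inner_self_eq_norm_sq (𝕜 := ℂ) h₀
      rw [hTh₀]
      simp [inner_sub_left, inner_smul_left, Complex.sub_re, Complex.neg_re,
        Complex.conj_ofReal, Complex.re_ofReal_mul, Complex.smul_re, smul_eq_mul,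
        re_inner_smul_left, hself]
      left; rw [← Complex.ofReal_pow, Complex.ofReal_re]
    have e4 : (⟪T (h - h₀), h - h₀⟫_ℂ).re = (⟪T h, h⟫_ℂ).re - (⟪T h, h₀⟫_ℂ).re
        - (⟪T h₀, h⟫_ℂ).re + (⟪T h₀, h₀⟫_ℂ).re := by
      simp [map_sub, inner_sub_left, inner_sub_right, Complex.sub_re, Complex.add_re]
      ring
    have e5 : ‖h - h₀‖ ^ 2 = ‖h‖ ^ 2 - 2 * (⟪h, h₀⟫_ℂ).re + ‖h₀‖ ^ 2 :=
      norm_sub_sq (𝕜 := ℂ) h h₀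
    rw [e5, e4, e1, e2, e3]; ring
  have hlow : ∀ h : H, (⟪g, h₀⟫_ℂ).re ≤ (⟪T h, h⟫_ℂ).re + 2 * (⟪g, h⟫_ℂ).re + ε * ‖h‖ ^ 2 := by
    intro h
    rw [key h]
    have := hpos (h - h₀)
    nlinarith [sq_nonneg ‖h - h₀‖, mul_nonneg hε (sq_nonneg ‖h - h₀‖)]
  apply le_antisymm
  · have hb : BddBelow (Set.range fun h : H =>
        (⟪T h, h⟫_ℂ).re + 2 * (⟪g, h⟫_ℂ).re + ε * ‖h‖ ^ 2) :=
      ⟨(⟪g, h₀⟫_ℂ).re, by rintro _ ⟨h, rfl⟩; exact hlow h⟩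
    refine (ciInf_le hb h₀).trans ?_
    rw [key h₀]
    simp
  · exact le_ciInf hlow

lemma psi_tendsto (q : H → ℝ) (b : ℝ) (hb : ∀ h, b ≤ q h) :
    Tendsto (fun ε : ℝ => ⨅ h : H, (q h + ε * ‖h‖ ^ 2)) (𝓝[>] 0) (𝓝 (⨅ h, q h)) := by
  haveI : Nonempty H := ⟨0⟩
  have hbq : BddBelow (Set.range q) := ⟨b, by rintro _ ⟨i, rfl⟩; exact hb i⟩
  have hbdd : ∀ ε : ℝ, 0 ≤ ε → BddBelow (Set.range fun h : H => q h + ε * ‖h‖ ^ 2) := by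
    intro ε hε
    exact ⟨b, by rintro _ ⟨h, rfl⟩; dsimp only; nlinarith [hb h, mul_nonneg hε (sq_nonneg ‖h‖)]⟩
  rw [Metric.tendsto_nhdsWithin_nhds]
  intro δ hδ
  obtain ⟨h, hh⟩ := exists_lt_of_ciInf_lt (show (⨅ h, q h) < (⨅ h, q h) + δ/2 by linarith)
  refine ⟨δ / (2 * (‖h‖ ^ 2 + 1)), by positivity, fun ε hε hdist => ?_⟩
  have hε0 : (0:ℝ) < ε := hε
  have upper : (⨅ h' : H, (q h' + ε * ‖h'‖ ^ 2)) ≤ q h + ε * ‖h‖ ^ 2 := ciInf_le (hbdd ε hε0.le) h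
  have lower : (⨅ h', q h') ≤ ⨅ h' : H, (q h' + ε * ‖h'‖ ^ 2) :=
    le_ciInf fun h' => (ciInf_le hbq h').trans (by nlinarith [mul_nonneg hε0.le (sq_nonneg ‖h'‖)])
  rw [Real.dist_eq] at hdist ⊢
  have hεsmall : ε * ‖h‖ ^ 2 < δ / 2 := by
    have h1 : |ε - 0| = ε := by rw [sub_zero, abs_of_pos hε0]
    rw [h1] at hdist
    have hc : (0:ℝ) < ‖h‖ ^ 2 + 1 := by positivity
    have h3 : ε * (‖h‖ ^ 2 + 1) < δ / 2 := by
      calc ε * (‖h‖ ^ 2 + 1) < δ / (2 * (‖h‖ ^ 2 + 1)) * (‖h‖ ^ 2 + 1) :=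
            mul_lt_mul_of_pos_right hdist hc
        _ = δ / 2 := by field_simp
    nlinarith [sq_nonneg ‖h‖]
  rw [abs_lt]
  constructor <;> nlinarith

end helpers

/-- For a selfadjoint contraction `U = [[D, C], [C*, A]]` on `N ⊕ H` with transfer function
`Θ(x) = D + x·C (I − xA)⁻¹ C*`, the quadratic form `⟪Θ(x)f, f⟫` converges, as `x → −1⁺`,
to `⟪(I + U)_N f, f⟫ − ‖f‖²` and, as `x → 1⁻`, to `‖f‖² − ⟪(I − U)_N f, f⟫`, where the
shorted operators are given by infima of quadratic forms. -/
theorem stmt_13 {N H : Type*} [NormedAddCommGroup N] [InnerProductSpace ℂ N] [CompleteSpace N]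
    [NormedAddCommGroup H] [InnerProductSpace ℂ H] [CompleteSpace H]
    (D : N →L[ℂ] N) (C : H →L[ℂ] N) (A : H →L[ℂ] H)
    (hUsa : IsSelfAdjoint (blk D C (adjoint C) A))
    (hUc : ‖blk D C (adjoint C) A‖ ≤ 1) (f : N) :
    Tendsto
        (fun x : ℝ =>
          (⟪(D + (x : ℂ) • (C ∘L Ring.inverse (1 - (x : ℂ) • A) ∘L adjoint C)) f, f⟫_ℂ).re)
        (nhdsWithin (-1 : ℝ) (Set.Ioi (-1 : ℝ)))
        (nhds ((⨅ h : H,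
          (⟪(1 + blk D C (adjoint C) A) (mk2 f h), mk2 f h⟫_ℂ).re) - ‖f‖ ^ 2)) ∧
      Tendsto
        (fun x : ℝ =>
          (⟪(D + (x : ℂ) • (C ∘L Ring.inverse (1 - (x : ℂ) • A) ∘L adjoint C)) f, f⟫_ℂ).re)
        (nhdsWithin (1 : ℝ) (Set.Iio (1 : ℝ)))
        (nhds (‖f‖ ^ 2 - ⨅ h : H,
          (⟪(1 - blk D C (adjoint C) A) (mk2 f h), mk2 f h⟫_ℂ).re)) := by
  haveI : Nonempty H := ⟨0⟩
  set U : WithLp 2 (N × H) →L[ℂ] WithLp 2 (N × H) := blk D C (adjoint C) A with hUdef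
  have happ : ∀ (e : N) (h : H), U (mk2 e h) = mk2 (D e + C h) (adjoint C e + A h) :=
    fun e h => rfl
  have hinner : ∀ (a : N) (b : H) (c : N) (d : H),
      ⟪mk2 a b, mk2 c d⟫_ℂ = ⟪a, c⟫_ℂ + ⟪b, d⟫_ℂ := fun _ _ _ _ => rfl
  have hnorm2 : ∀ (a : N) (b : H), ‖mk2 a b‖ ^ 2 = ‖a‖ ^ 2 + ‖b‖ ^ 2 := by
    intro a b
    rw [← inner_self_eq_norm_sq (𝕜 := ℂ) (mk2 a b), hinner, map_add,
      inner_self_eq_norm_sq, inner_self_eq_norm_sq]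
  have hUsym : ∀ v w, ⟪U v, w⟫_ℂ = ⟪v, U w⟫_ℂ := by
    intro v w
    conv_lhs => rw [← ContinuousLinearMap.isSelfAdjoint_iff'.mp hUsa]
    exact adjoint_inner_left U w v
  have hAsym : ∀ h k : H, ⟪A h, k⟫_ℂ = ⟪h, A k⟫_ℂ := by
    intro h k
    have h1 := hUsym (mk2 0 h) (mk2 0 k)
    simpa [happ, hinner, map_zero] using h1
  have hUle : ∀ v, ‖U v‖ ≤ ‖v‖ := by
    intro v
    calc ‖U v‖ ≤ ‖U‖ * ‖v‖ := U.le_opNorm _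
      _ ≤ 1 * ‖v‖ := mul_le_mul_of_nonneg_right hUc (norm_nonneg _)
      _ = ‖v‖ := one_mul _
  have hAle : ∀ h : H, ‖A h‖ ≤ ‖h‖ := by
    intro h
    have h1 : ‖U (mk2 (0:N) h)‖ ≤ ‖mk2 (0:N) h‖ := hUle _
    have e1 : U (mk2 (0:N) h) = mk2 (C h) (A h) := by
      rw [happ]; simp
    rw [e1] at h1
    have h2 : ‖mk2 (C h) (A h)‖ ^ 2 ≤ ‖mk2 (0:N) h‖ ^ 2 :=
      pow_le_pow_left₀ (norm_nonneg _) h1 2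
    rw [hnorm2, hnorm2] at h2
    simp only [norm_zero] at h2
    nlinarith [norm_nonneg (A h), norm_nonneg h, sq_nonneg ‖C h‖]
  have hUre : ∀ v, |(⟪U v, v⟫_ℂ).re| ≤ ‖v‖ ^ 2 := by
    intro v
    have h1 : |(⟪U v, v⟫_ℂ).re| ≤ ‖⟪U v, v⟫_ℂ‖ := Complex.abs_re_le_norm _
    have h2 : ‖⟪U v, v⟫_ℂ‖ ≤ ‖U v‖ * ‖v‖ := norm_inner_le_norm _ _
    nlinarith [hUle v, norm_nonneg v, norm_nonneg (U v)]
  have hAre : ∀ h : H, |(⟪A h, h⟫_ℂ).re| ≤ ‖h‖ ^ 2 := by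
    intro h
    have h1 : |(⟪A h, h⟫_ℂ).re| ≤ ‖⟪A h, h⟫_ℂ‖ := Complex.abs_re_le_norm _
    have h2 : ‖⟪A h, h⟫_ℂ‖ ≤ ‖A h‖ * ‖h‖ := norm_inner_le_norm _ _
    nlinarith [hAle h, norm_nonneg h, norm_nonneg (A h)]
  set g : H := adjoint C f with hgdef
  have hCinner : ∀ u : H, ⟪C u, f⟫_ℂ = ⟪u, g⟫_ℂ := fun u => (adjoint_inner_right C u f).symm
  set dre : ℝ := (⟪D f, f⟫_ℂ).re with hdre
  have rff : (⟪f, f⟫_ℂ).re = ‖f‖ ^ 2 := by simpa using inner_self_eq_norm_sq (𝕜 := ℂ) f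
  have rhh : ∀ h : H, (⟪h, h⟫_ℂ).re = ‖h‖ ^ 2 := fun h => by
    simpa using inner_self_eq_norm_sq (𝕜 := ℂ) h
  have hF : ∀ x : ℝ,
      (⟪(D + (x : ℂ) • (C ∘L Ring.inverse (1 - (x : ℂ) • A) ∘L adjoint C)) f, f⟫_ℂ).re
      = dre + x * (⟪(Ring.inverse (1 - (x : ℂ) • A)) g, g⟫_ℂ).re := by
    intro x
    rw [add_apply, inner_add_left, Complex.add_re, smul_apply, inner_smul_left,
      Complex.conj_ofReal, Complex.re_ofReal_mul, comp_apply, comp_apply, hCinner]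
  -- resolvent identity, shared by both sides
  have hRES : ∀ x : ℝ, |x| < 1 → Ring.inverse (1 - (x : ℂ) • A) g
      - (x : ℂ) • A (Ring.inverse (1 - (x : ℂ) • A) g) = g := by
    intro x hx
    have hAnorm : ‖A‖ ≤ 1 := opNorm_le_bound _ zero_le_one fun h => by
      rw [one_mul]; exact hAle h
    have hxn : ‖(x : ℂ) • A‖ < 1 := by
      rw [norm_smul]
      have hh : ‖(x : ℂ)‖ = |x| := by
        rw [Complex.norm_real, Real.norm_eq_abs]
      rw [hh]
      nlinarith [abs_nonneg x, norm_nonneg A]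
    have hu : IsUnit (1 - (x : ℂ) • A) := ⟨Units.oneSub _ hxn, rfl⟩
    have h1 : (1 - (x : ℂ) • A) * Ring.inverse (1 - (x : ℂ) • A) = 1 :=
      Ring.mul_inverse_cancel _ hu
    have h2 : (1 - (x : ℂ) • A) (Ring.inverse (1 - (x : ℂ) • A) g) = g := by
      have := congrArg (fun M : H →L[ℂ] H => M g) h1
      simpa using this
    simpa [sub_apply, smul_apply, one_apply] using h2
  constructor
  · -- x → -1⁺
    set T₁ : H →L[ℂ] H := 1 + A with hT₁
    have hT₁app : ∀ h : H, T₁ h = h + A h := fun h => by rw [hT₁, add_apply, ContinuousLinearMap.one_apply]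
    have hT₁sym : ∀ h k : H, ⟪T₁ h, k⟫_ℂ = ⟪h, T₁ k⟫_ℂ := by
      intro h k
      rw [hT₁app, hT₁app, inner_add_left, inner_add_right, hAsym h k]
    have hreT₁ : ∀ h : H, (⟪T₁ h, h⟫_ℂ).re = ‖h‖ ^ 2 + (⟪A h, h⟫_ℂ).re := fun h => by
      rw [hT₁app, inner_add_left, Complex.add_re, rhh]
    have hT₁pos : ∀ h : H, 0 ≤ (⟪T₁ h, h⟫_ℂ).re := by
      intro h
      rw [hreT₁]
      have := abs_le.mp (hAre h)
      linarith
    set q₁ : H → ℝ := fun h => (⟪T₁ h, h⟫_ℂ).re + 2 * (⟪g, h⟫_ℂ).re with hq₁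
    have hQ₁ : ∀ h : H, (⟪(1 + U) (mk2 f h), mk2 f h⟫_ℂ).re = ‖f‖ ^ 2 + dre + q₁ h := by
      intro h
      have e0 : (1 + U) (mk2 f h) = mk2 f h + U (mk2 f h) := rfl
      rw [e0, inner_add_left, hinner, happ, hinner]
      simp only [inner_add_left, Complex.add_re]
      rw [rff, rhh, hCinner, hq₁]
      dsimp only
      rw [hreT₁, re_inner_symm h g, ← hgdef, ← hdre]
      ring
    have hQ₁pos : ∀ h : H, 0 ≤ (⟪(1 + U) (mk2 f h), mk2 f h⟫_ℂ).re := by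
      intro h
      have e0 : (1 + U) (mk2 f h) = mk2 f h + U (mk2 f h) := rfl
      rw [e0, inner_add_left, Complex.add_re]
      have r := abs_le.mp (hUre (mk2 f h))
      have r2 : (⟪mk2 f h, mk2 f h⟫_ℂ).re = ‖mk2 f h‖ ^ 2 := by
        simpa using inner_self_eq_norm_sq (𝕜 := ℂ) (mk2 f h)
      rw [r2]
      linarith
    have hb₁ : ∀ h : H, -‖f‖ ^ 2 - dre ≤ q₁ h := fun h => by
      have h1 := hQ₁ h; have h2 := hQ₁pos h; linarith
    have hInf₁ : (⨅ h : H, (⟪(1 + U) (mk2 f h), mk2 f h⟫_ℂ).re)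
        = ‖f‖ ^ 2 + dre + ⨅ h, q₁ h := by
      calc (⨅ h : H, (⟪(1 + U) (mk2 f h), mk2 f h⟫_ℂ).re)
          = ⨅ h : H, (‖f‖ ^ 2 + dre + q₁ h) := iInf_congr hQ₁
        _ = ‖f‖ ^ 2 + dre + ⨅ h, q₁ h := myIInf_const_add _ q₁ _ hb₁
    have hψ₁ := psi_tendsto q₁ _ hb₁
    have hε₁ : Tendsto (fun x : ℝ => (1 + x) / (-x)) (𝓝[>] (-1 : ℝ)) (𝓝[>] (0 : ℝ)) := by
      rw [tendsto_nhdsWithin_iff]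
      constructor
      · have hc : ContinuousAt (fun x : ℝ => (1 + x) / (-x)) (-1) := by
          apply ContinuousAt.div
          · fun_prop
          · fun_prop
          · norm_num
        have := hc.tendsto.mono_left (nhdsWithin_le_nhds (s := Set.Ioi (-1 : ℝ)))
        simpa using this
      · filter_upwards [Ioo_mem_nhdsGT_of_mem
          (show (-1 : ℝ) ∈ Set.Ico (-1 : ℝ) 0 by constructor <;> norm_num)] with x hx
        simp only [Set.mem_Ioi]
        exact div_pos (by linarith [hx.1]) (by linarith [hx.2])
    have key₁ : ∀ x ∈ Set.Ioo (-1 : ℝ) 0,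
        dre + (⨅ h : H, (q₁ h + ((1 + x) / (-x)) * ‖h‖ ^ 2))
        = (⟪(D + (x : ℂ) • (C ∘L Ring.inverse (1 - (x : ℂ) • A) ∘L adjoint C)) f, f⟫_ℂ).re := by
      intro x hx
      obtain ⟨hx1, hx2⟩ := hx
      set R : H →L[ℂ] H := Ring.inverse (1 - (x : ℂ) • A) with hRdef
      have hRg := hRES x (abs_lt.mpr ⟨hx1, by linarith⟩)
      rw [← hRdef] at hRg
      have hAR : (x : ℂ) • A (R g) = R g - g :=
        eq_sub_iff_add_eq.mpr (sub_eq_iff_eq_add'.mp hRg).symm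
      have hx0 : x ≠ 0 := ne_of_lt hx2
      have hεx : (((1 + x) / (-x) : ℝ) : ℂ) * (x : ℂ) = -(1 + (x : ℂ)) := by
        have hxne : (-x) ≠ 0 := neg_ne_zero.mpr hx0
        have hr : ((1 + x) / (-x)) * x = -(1 + x) := by
          rw [show ((1 + x) / (-x)) * x = -(((1 + x) / (-x)) * (-x)) by ring,
            div_mul_cancel₀ _ hxne]
        calc (((1 + x) / (-x) : ℝ) : ℂ) * (x : ℂ) = (((1 + x) / (-x) * x : ℝ) : ℂ) := by
              push_cast; ring
          _ = -(1 + (x : ℂ)) := by rw [hr]; push_cast; ring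
      have hεpos : 0 < (1 + x) / (-x) := div_pos (by linarith) (by linarith)
      have hh₀ : T₁ ((x : ℂ) • R g) + (((1 + x) / (-x) : ℝ) : ℂ) • ((x : ℂ) • R g) = -g := by
        have e1 : T₁ ((x : ℂ) • R g) = (x : ℂ) • R g + (x : ℂ) • A (R g) := by
          rw [hT₁app, map_smul]
        rw [e1, hAR, smul_smul, hεx]
        module
      have hsq := sq_key T₁ hT₁sym hT₁pos hεpos.le g ((x : ℂ) • R g) hh₀
      rw [hF x]
      congr 1
      rw [show (⨅ h : H, (q₁ h + ((1 + x) / (-x)) * ‖h‖ ^ 2))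
          = ⨅ h : H, ((⟪T₁ h, h⟫_ℂ).re + 2 * (⟪g, h⟫_ℂ).re + ((1 + x) / (-x)) * ‖h‖ ^ 2) from
        iInf_congr fun h => by rw [hq₁]]
      rw [hsq, inner_smul_right, Complex.re_ofReal_mul, re_inner_symm g (R g)]
    have hcomp : Tendsto
        (fun x : ℝ => dre + ⨅ h : H, (q₁ h + ((1 + x) / (-x)) * ‖h‖ ^ 2))
        (𝓝[>] (-1 : ℝ)) (𝓝 (dre + ⨅ h, q₁ h)) :=
      tendsto_const_nhds.add (hψ₁.comp hε₁)
    have hgoalval : (⨅ h : H, (⟪(1 + U) (mk2 f h), mk2 f h⟫_ℂ).re) - ‖f‖ ^ 2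
        = dre + ⨅ h, q₁ h := by rw [hInf₁]; ring
    rw [hgoalval]
    apply hcomp.congr'
    filter_upwards [Ioo_mem_nhdsGT_of_mem
      (show (-1 : ℝ) ∈ Set.Ico (-1 : ℝ) 0 by constructor <;> norm_num)] with x hx
    exact key₁ x hx
  · -- x → 1⁻
    set T₂ : H →L[ℂ] H := 1 - A with hT₂
    have hT₂app : ∀ h : H, T₂ h = h - A h := fun h => by rw [hT₂, sub_apply, ContinuousLinearMap.one_apply]
    have hT₂sym : ∀ h k : H, ⟪T₂ h, k⟫_ℂ = ⟪h, T₂ k⟫_ℂ := by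
      intro h k
      rw [hT₂app, hT₂app, inner_sub_left, inner_sub_right, hAsym h k]
    have hreT₂ : ∀ h : H, (⟪T₂ h, h⟫_ℂ).re = ‖h‖ ^ 2 - (⟪A h, h⟫_ℂ).re := fun h => by
      rw [hT₂app, inner_sub_left, Complex.sub_re, rhh]
    have hT₂pos : ∀ h : H, 0 ≤ (⟪T₂ h, h⟫_ℂ).re := by
      intro h
      rw [hreT₂]
      have := abs_le.mp (hAre h)
      linarith
    set q₂ : H → ℝ := fun h => (⟪T₂ h, h⟫_ℂ).re + 2 * (⟪g, h⟫_ℂ).re with hq₂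
    have hq₂neg : ∀ h : H, q₂ (-h) = (⟪T₂ h, h⟫_ℂ).re - 2 * (⟪g, h⟫_ℂ).re := by
      intro h
      rw [hq₂]
      dsimp only
      rw [map_neg, inner_neg_left, inner_neg_right, inner_neg_right]
      simp [Complex.neg_re]
      ring
    have hQ₂ : ∀ h : H, (⟪(1 - U) (mk2 f h), mk2 f h⟫_ℂ).re
        = ‖f‖ ^ 2 - dre + q₂ (-h) := by
      intro h
      have e0 : (1 - U) (mk2 f h) = mk2 f h - U (mk2 f h) := rfl
      rw [e0, inner_sub_left, hinner, happ, hinner]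
      simp only [inner_add_left, Complex.add_re, Complex.sub_re]
      rw [rff, rhh, hCinner, hq₂neg, hreT₂, re_inner_symm h g, ← hgdef, ← hdre]
      ring
    have hQ₂pos : ∀ h : H, 0 ≤ (⟪(1 - U) (mk2 f h), mk2 f h⟫_ℂ).re := by
      intro h
      have e0 : (1 - U) (mk2 f h) = mk2 f h - U (mk2 f h) := rfl
      rw [e0, inner_sub_left, Complex.sub_re]
      have r := abs_le.mp (hUre (mk2 f h))
      have r2 : (⟪mk2 f h, mk2 f h⟫_ℂ).re = ‖mk2 f h‖ ^ 2 := by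
        simpa using inner_self_eq_norm_sq (𝕜 := ℂ) (mk2 f h)
      rw [r2]
      linarith
    have hb₂ : ∀ h : H, dre - ‖f‖ ^ 2 ≤ q₂ h := by
      intro h
      have h1 := hQ₂ (-h)
      have h2 := hQ₂pos (-h)
      rw [neg_neg] at h1
      linarith
    have hInf₂ : (⨅ h : H, (⟪(1 - U) (mk2 f h), mk2 f h⟫_ℂ).re)
        = ‖f‖ ^ 2 - dre + ⨅ h, q₂ h := by
      calc (⨅ h : H, (⟪(1 - U) (mk2 f h), mk2 f h⟫_ℂ).re)
          = ⨅ h : H, (‖f‖ ^ 2 - dre + q₂ (-h)) := iInf_congr hQ₂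
        _ = ⨅ h : H, (‖f‖ ^ 2 - dre + q₂ h) := by
            apply le_antisymm
            · exact le_ciInf fun h => by
               have hc : BddBelow (Set.range fun h : H => ‖f‖ ^ 2 - dre + q₂ (-h)) :=
                 ⟨‖f‖ ^ 2 - dre + (dre - ‖f‖ ^ 2), by
                   rintro _ ⟨h', rfl⟩; dsimp only; linarith [hb₂ (-h')]⟩
               have := ciInf_le hc (-h)
               simpa using this
            · exact le_ciInf fun h => by
               have hc : BddBelow (Set.range fun h : H => ‖f‖ ^ 2 - dre + q₂ h) :=
                 ⟨‖f‖ ^ 2 - dre + (dre - ‖f‖ ^ 2), by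
                   rintro _ ⟨h', rfl⟩; dsimp only; linarith [hb₂ h']⟩
               exact ciInf_le hc (-h)
        _ = ‖f‖ ^ 2 - dre + ⨅ h, q₂ h := myIInf_const_add _ q₂ _ hb₂
    have hψ₂ := psi_tendsto q₂ _ hb₂
    have hε₂ : Tendsto (fun x : ℝ => (1 - x) / x) (𝓝[<] (1 : ℝ)) (𝓝[>] (0 : ℝ)) := by
      rw [tendsto_nhdsWithin_iff]
      constructor
      · have hc : ContinuousAt (fun x : ℝ => (1 - x) / x) 1 := by
          apply ContinuousAt.div
          · fun_prop
          · fun_prop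
          · norm_num
        have := hc.tendsto.mono_left (nhdsWithin_le_nhds (s := Set.Iio (1 : ℝ)))
        simpa using this
      · filter_upwards [Ioo_mem_nhdsLT_of_mem
          (show (1 : ℝ) ∈ Set.Ioc (0 : ℝ) 1 by constructor <;> norm_num)] with x hx
        simp only [Set.mem_Ioi]
        exact div_pos (by linarith [hx.2]) (by linarith [hx.1])
    have key₂ : ∀ x ∈ Set.Ioo (0 : ℝ) 1,
        dre - (⨅ h : H, (q₂ h + ((1 - x) / x) * ‖h‖ ^ 2))
        = (⟪(D + (x : ℂ) • (C ∘L Ring.inverse (1 - (x : ℂ) • A) ∘L adjoint C)) f, f⟫_ℂ).re := by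
      intro x hx
      obtain ⟨hx1, hx2⟩ := hx
      set R : H →L[ℂ] H := Ring.inverse (1 - (x : ℂ) • A) with hRdef
      have hRg := hRES x (abs_lt.mpr ⟨by linarith, hx2⟩)
      rw [← hRdef] at hRg
      have hAR : (x : ℂ) • A (R g) = R g - g :=
        eq_sub_iff_add_eq.mpr (sub_eq_iff_eq_add'.mp hRg).symm
      have hx0 : x ≠ 0 := ne_of_gt hx1
      have hεx : (((1 - x) / x : ℝ) : ℂ) * (x : ℂ) = 1 - (x : ℂ) := by
        have hr : ((1 - x) / x) * x = 1 - x := div_mul_cancel₀ _ hx0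
        calc (((1 - x) / x : ℝ) : ℂ) * (x : ℂ) = (((1 - x) / x * x : ℝ) : ℂ) := by
              push_cast; ring
          _ = 1 - (x : ℂ) := by rw [hr]; push_cast; ring
      have hεpos : 0 < (1 - x) / x := div_pos (by linarith) (by linarith)
      have hh₀ : T₂ (-((x : ℂ) • R g)) + (((1 - x) / x : ℝ) : ℂ) • (-((x : ℂ) • R g)) = -g := by
        have e1 : T₂ (-((x : ℂ) • R g)) = -((x : ℂ) • R g) + (x : ℂ) • A (R g) := by
          rw [hT₂app, map_neg, map_smul]
          module
        rw [e1, hAR, smul_neg, smul_smul, hεx]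
        module
      have hsq := sq_key T₂ hT₂sym hT₂pos hεpos.le g (-((x : ℂ) • R g)) hh₀
      rw [hF x]
      have hs2 : (⨅ h : H, (q₂ h + ((1 - x) / x) * ‖h‖ ^ 2))
          = (⟪g, -((x : ℂ) • R g)⟫_ℂ).re := by
        rw [show (⨅ h : H, (q₂ h + ((1 - x) / x) * ‖h‖ ^ 2))
            = ⨅ h : H, ((⟪T₂ h, h⟫_ℂ).re + 2 * (⟪g, h⟫_ℂ).re + ((1 - x) / x) * ‖h‖ ^ 2) from
          iInf_congr fun h => by rw [hq₂]]
        exact hsq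
      rw [hs2, inner_neg_right, Complex.neg_re, inner_smul_right, Complex.re_ofReal_mul,
        re_inner_symm g (R g)]
      ring
    have hcomp : Tendsto
        (fun x : ℝ => dre - ⨅ h : H, (q₂ h + ((1 - x) / x) * ‖h‖ ^ 2))
        (𝓝[<] (1 : ℝ)) (𝓝 (dre - ⨅ h, q₂ h)) :=
      tendsto_const_nhds.sub (hψ₂.comp hε₂)
    have hgoalval : ‖f‖ ^ 2 - (⨅ h : H, (⟪(1 - U) (mk2 f h), mk2 f h⟫_ℂ).re)
        = dre - ⨅ h, q₂ h := by rw [hInf₂]; ring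
    rw [hgoalval]
    apply hcomp.congr'
    filter_upwards [Ioo_mem_nhdsLT_of_mem
      (show (1 : ℝ) ∈ Set.Ioc (0 : ℝ) 1 by constructor <;> norm_num)] with x hx
    exact key₂ x hx
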